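/- arXiv:0802.1382 — 2 statements merged into one kernel-verified Lean document; each statement's English description precedes it below -/
import Mathlib

section
/- For natural numbers k, n with k < n and n ≥ 1, every maximal chain of the poset P_{k,n} has exactly k + n elements. Consequently P_{k,n} satisfies the Dedekind–Jordan condition (all maximal chains have equal length) and its rank, the number of elements in a maximal chain minus one, equals k + n − 1. -/
/-- Observation 3 (Dedekind–Jordan property): for `k < n`, `n ≥ 1`, every
maximal chain of the poset `P_{k,n}` has exactly `k + n` elements; hence all
maximal chains have equal size and the rank of `P_{k,n}` is `k + n - 1`. -/
theorem maxChain_card_Pkn (k n : ℕ) (hk : k < n) (hn : 1 ≤ n)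
    (C : Set {p : ℕ × ℕ // p.1 ≤ k ∧ p.2 ≤ n ∧ p.1 < p.2})
    (hC : IsMaxChain (· ≤ ·) C) :
    C.ncard = k + n := by
  set f : {p : ℕ × ℕ // p.1 ≤ k ∧ p.2 ≤ n ∧ p.1 < p.2} → ℕ := fun x => x.1.1 + x.1.2 - 1 with hf
  have le_iff : ∀ x y : {p : ℕ × ℕ // p.1 ≤ k ∧ p.2 ≤ n ∧ p.1 < p.2}, x ≤ y ↔ x.1.1 ≤ y.1.1 ∧ x.1.2 ≤ y.1.2 := by
    intro x y; exact Iff.rfl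
  have hpos : ∀ x : {p : ℕ × ℕ // p.1 ≤ k ∧ p.2 ≤ n ∧ p.1 < p.2}, 1 ≤ x.1.2 := fun x => Nat.one_le_iff_ne_zero.mpr
    (by have := x.2.2.2; omega)
  have fmono : ∀ x y : {p : ℕ × ℕ // p.1 ≤ k ∧ p.2 ≤ n ∧ p.1 < p.2}, x ≤ y → f x ≤ f y := by
    intro x y hxy
    obtain ⟨h1, h2⟩ := (le_iff x y).mp hxy
    simp only [hf]
    omega
  have fstrict : ∀ x y : {p : ℕ × ℕ // p.1 ≤ k ∧ p.2 ≤ n ∧ p.1 < p.2}, x ≤ y → f x = f y → x = y := by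
    intro x y hxy hfxy
    obtain ⟨h1, h2⟩ := (le_iff x y).mp hxy
    have p1 := hpos x; have p2 := hpos y
    simp only [hf] at hfxy
    have e1 : x.1.1 = y.1.1 := by omega
    have e2 : x.1.2 = y.1.2 := by omega
    exact Subtype.ext (Prod.ext e1 e2)
  have hfinT : Finite {p : ℕ × ℕ // p.1 ≤ k ∧ p.2 ≤ n ∧ p.1 < p.2} := by
    refine Finite.of_injective
      (fun x : {p : ℕ × ℕ // p.1 ≤ k ∧ p.2 ≤ n ∧ p.1 < p.2} => (⟨x.1, ⟨x.2.1, x.2.2.1⟩⟩ : Set.Iic ((k, n) : ℕ × ℕ))) ?_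
    · intro x y hxy
      exact Subtype.ext (Subtype.mk_eq_mk.mp hxy)
  have hCfin : C.Finite := Set.toFinite C
  -- bottom and top
  set bot : {p : ℕ × ℕ // p.1 ≤ k ∧ p.2 ≤ n ∧ p.1 < p.2} := ⟨(0, 1), Nat.zero_le _, hn, Nat.zero_lt_one⟩ with hbotdef
  set top : {p : ℕ × ℕ // p.1 ≤ k ∧ p.2 ≤ n ∧ p.1 < p.2} := ⟨(k, n), le_refl _, le_refl _, hk⟩ with htopdef
  have hbot_le : ∀ x : {p : ℕ × ℕ // p.1 ≤ k ∧ p.2 ≤ n ∧ p.1 < p.2}, bot ≤ x := fun x => (le_iff _ _).mpr ⟨Nat.zero_le _, hpos x⟩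
  have hle_top : ∀ x : {p : ℕ × ℕ // p.1 ≤ k ∧ p.2 ≤ n ∧ p.1 < p.2}, x ≤ top := fun x => (le_iff _ _).mpr ⟨x.2.1, x.2.2.1⟩
  have hbotC : bot ∈ C := by
    have h1 : IsChain (· ≤ ·) (insert bot C) :=
      hC.1.insert (fun x hx _ => Or.inl (hbot_le x))
    have h2 := hC.2 h1 (Set.subset_insert _ _)
    rw [h2]; exact Set.mem_insert _ _
  have htopC : top ∈ C := by
    have h1 : IsChain (· ≤ ·) (insert top C) :=
      hC.1.insert (fun x hx _ => Or.inr (hle_top x))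
    have h2 := hC.2 h1 (Set.subset_insert _ _)
    rw [h2]; exact Set.mem_insert _ _
  have hfbot : f bot = 0 := by simp [hf, hbotdef]
  have hftop : f top = k + n - 1 := by simp [hf, htopdef]
  -- surjectivity of f onto Iio (k+n)
  have hsurj : ∀ r, r < k + n → r ∈ f '' C := by
    intro r hr
    by_contra hrC
    have hne : ∀ x ∈ C, f x ≠ r := fun x hx h => hrC ⟨x, hx, h⟩
    have hr0 : 0 < r := by
      rcases Nat.eq_zero_or_pos r with h | h
      · exact absurd (h ▸ hfbot) (hne bot hbotC)
      · exact h
    have hrtop : r < k + n - 1 := by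
      have := hne top htopC
      omega
    set A : Set {p : ℕ × ℕ // p.1 ≤ k ∧ p.2 ≤ n ∧ p.1 < p.2} := {x ∈ C | f x < r} with hA
    set B : Set {p : ℕ × ℕ // p.1 ≤ k ∧ p.2 ≤ n ∧ p.1 < p.2} := {x ∈ C | r < f x} with hB
    have hAfin : A.Finite := hCfin.subset (Set.sep_subset _ _)
    have hBfin : B.Finite := hCfin.subset (Set.sep_subset _ _)
    have hAne : A.Nonempty := ⟨bot, hbotC, by omega⟩
    have hBne : B.Nonempty := ⟨top, htopC, by omega⟩
    obtain ⟨a, haA, hamax⟩ : ∃ a ∈ A, ∀ a' ∈ A, f a ≤ f a' → f a = f a' := by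
      obtain ⟨a, ha, hm⟩ := Set.Finite.exists_maximalFor f A hAfin hAne
      exact ⟨a, ha, fun a' h1 h2 => le_antisymm h2 (hm h1 h2)⟩
    obtain ⟨b, hbB, hbmin⟩ : ∃ b ∈ B, ∀ b' ∈ B, f b' ≤ f b → f b = f b' := by
      obtain ⟨b, hb, hm⟩ := Set.Finite.exists_minimalFor f B hBfin hBne
      exact ⟨b, hb, fun b' h1 h2 => le_antisymm (hm h1 h2) h2⟩
    have hamax' : ∀ x ∈ A, x ≤ a := by
      intro x hx
      rcases eq_or_ne x a with h | h
      · exact h.le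
      · rcases hC.1 hx.1 haA.1 h with h' | h'
        · exact h'
        · exact (fstrict a x h' (hamax x hx (fmono _ _ h'))).symm.le
    have hbmin' : ∀ x ∈ B, b ≤ x := by
      intro x hx
      rcases eq_or_ne x b with h | h
      · exact h.ge
      · rcases hC.1 hx.1 hbB.1 h with h' | h'
        · exact (fstrict x b h' (hbmin x hx (fmono _ _ h')).symm).ge
        · exact h'
    have hab : a ≤ b := by
      rcases eq_or_ne a b with h | h
      · exact h.le
      · rcases hC.1 haA.1 hbB.1 h with h' | h'
        · exact h'
        · have := fmono b a h'
          have h1 := haA.2; have h2 := hbB.2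
          omega
    obtain ⟨hab1, hab2⟩ := (le_iff a b).mp hab
    have hgap : f a + 2 ≤ f b := by
      have h1 := haA.2; have h2 := hbB.2; omega
    have hgap' : a.1.1 + a.1.2 + 2 ≤ b.1.1 + b.1.2 := by
      have p1 := hpos a; have p2 := hpos b
      simp only [hf] at hgap; omega
    -- construct an intermediate element c with a < c < b
    have hbk := b.2.1; have hbn := b.2.2.1; have hblt := b.2.2.2
    have halt := a.2.2.2
    obtain ⟨c, hac, hcb, hca, hcb'⟩ :
        ∃ c : {p : ℕ × ℕ // p.1 ≤ k ∧ p.2 ≤ n ∧ p.1 < p.2}, a ≤ c ∧ c ≤ b ∧ c ≠ a ∧ c ≠ b := by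
      by_cases hcase : a.1.2 < b.1.2
      · refine ⟨⟨(a.1.1, a.1.2 + 1), a.2.1, by omega, by omega⟩, ?_, ?_, ?_, ?_⟩
        · exact (le_iff _ _).mpr ⟨le_refl _, Nat.le_succ _⟩
        · exact (le_iff _ _).mpr ⟨hab1, hcase⟩
        · intro h
          simp [Subtype.ext_iff, Prod.ext_iff] at h
        · intro h
          simp [Subtype.ext_iff, Prod.ext_iff] at h
          omega
      · refine ⟨⟨(a.1.1 + 1, a.1.2), by omega, a.2.2.1, by omega⟩, ?_, ?_, ?_, ?_⟩
        · exact (le_iff _ _).mpr ⟨Nat.le_succ _, le_refl _⟩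
        · exact (le_iff _ _).mpr ⟨show a.1.1 + 1 ≤ b.1.1 by omega, hab2⟩
        · intro h
          simp [Subtype.ext_iff, Prod.ext_iff] at h
        · intro h
          simp [Subtype.ext_iff, Prod.ext_iff] at h
          omega
    -- c is comparable with everything in C, contradicting maximality
    have hchain : IsChain (· ≤ ·) (insert c C) := by
      refine hC.1.insert (fun x hx _ => ?_)
      have hxr := hne x hx
      rcases Nat.lt_or_ge (f x) r with h | h
      · exact Or.inr ((hamax' x ⟨hx, h⟩).trans hac)
      · have : r < f x := by omega
        exact Or.inl (hcb.trans (hbmin' x ⟨hx, this⟩))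
    have hcC : c ∈ C := by
      have h2 := hC.2 hchain (Set.subset_insert _ _)
      rw [h2]; exact Set.mem_insert _ _
    have hfa : f a < f c := by
      have := fmono a c hac
      rcases Nat.eq_or_lt_of_le this with h | h
      · exact absurd (fstrict a c hac h).symm hca
      · exact h
    have hfc : f c < f b := by
      have := fmono c b hcb
      rcases Nat.eq_or_lt_of_le this with h | h
      · exact absurd (fstrict c b hcb h) hcb'
      · exact h
    have hcr := hne c hcC
    rcases Nat.lt_or_ge (f c) r with h | h
    · have := hamax c ⟨hcC, h⟩ hfa.le
      omega
    · have hcB : r < f c := by omega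
      have := hbmin c ⟨hcC, hcB⟩ hfc.le
      omega
  -- injectivity of f on C
  have hinj : Set.InjOn f C := by
    intro x hx y hy hxy
    rcases eq_or_ne x y with h | h
    · exact h
    · rcases hC.1 hx hy h with h' | h'
      · exact fstrict x y h' hxy
      · exact (fstrict y x h' hxy.symm).symm
  have himg : f '' C = Set.Iio (k + n) := by
    ext r
    constructor
    · rintro ⟨x, hx, rfl⟩
      have h1 := x.2.1; have h2 := x.2.2.1
      simp only [hf, Set.mem_Iio]
      omega
    · exact fun hr => hsurj r hr
  calc C.ncard = (f '' C).ncard := (Set.ncard_image_of_injOn hinj).symm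
    _ = (Set.Iio (k + n)).ncard := by rw [himg]
    _ = k + n := by rw [← Finset.coe_Iio, Set.ncard_coe_finset, Nat.card_Iio]
end

section
/- For natural numbers k, n with k < n and n ≥ 1, the number d(k,n) of maximal chains of the poset P_{k,n} satisfies n · d(k,n) = (n − k) · C(n + k − 1, k), where C denotes the binomial coefficient; equivalently, d(k,n) is the ballot number counting monotone lattice paths from (0,1) to (k,n) that stay strictly below the diagonal. -/
/-! Auxiliary development: maximal chains of subsets of `ℕ × ℕ`. -/

/-- The underlying set of the poset `P_{k,n}`. -/
def Pset (k n : ℕ) : Set (ℕ × ℕ) := {p | p.1 ≤ k ∧ p.2 ≤ n ∧ p.1 < p.2}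

/-- Maximal chains contained in a set `S ⊆ ℕ × ℕ`. -/
def MC (S : Set (ℕ × ℕ)) : Set (Set (ℕ × ℕ)) :=
  {C | C ⊆ S ∧ IsChain (· ≤ ·) C ∧
    ∀ D, D ⊆ S → IsChain (· ≤ ·) D → C ⊆ D → D = C}

lemma Pset_finite (k n : ℕ) : (Pset k n).Finite := by
  apply Set.Finite.subset (Set.finite_Iic ((k, n) : ℕ × ℕ))
  rintro ⟨a, b⟩ ⟨h1, h2, h3⟩
  exact ⟨h1, h2⟩

lemma MC_finite {S : Set (ℕ × ℕ)} (hS : S.Finite) : (MC S).Finite :=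
  Set.Finite.subset hS.finite_subsets (fun _ hC => hC.1)

/-- A maximal chain contains any top element of `S`. -/
lemma top_mem_MC {S : Set (ℕ × ℕ)} {t : ℕ × ℕ} (ht : t ∈ S)
    (htop : ∀ x ∈ S, x ≤ t) {C : Set (ℕ × ℕ)} (hC : C ∈ MC S) : t ∈ C := by
  obtain ⟨hCS, hCch, hCmax⟩ := hC
  have hins : IsChain (· ≤ ·) (insert t C) :=
    hCch.insert (fun b hb _ => Or.inr (htop b (hCS hb)))
  have h := hCmax (insert t C) (by
    intro x hx
    rcases hx with rfl | hx
    · exact ht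
    · exact hCS hx) hins (Set.subset_insert _ _)
  rw [← h]; exact Set.mem_insert _ _

/-- Removing a top element gives a bijection on maximal chains. -/
lemma ncard_MC_remove_top {S : Set (ℕ × ℕ)} {t : ℕ × ℕ} (ht : t ∈ S)
    (htop : ∀ x ∈ S, x ≤ t) : (MC S).ncard = (MC (S \ {t})).ncard := by
  have key1 : ∀ C ∈ MC S, C \ {t} ∈ MC (S \ {t}) := by
    intro C hC
    obtain ⟨hCS, hCch, hCmax⟩ := hC
    refine ⟨fun x hx => ⟨hCS hx.1, hx.2⟩, hCch.mono Set.diff_subset, ?_⟩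
    intro D hDS hDch hsub
    have htD : t ∉ D := fun h => (hDS h).2 rfl
    have hins : IsChain (· ≤ ·) (insert t D) :=
      hDch.insert (fun b hb _ => Or.inr (htop b (hDS hb).1))
    have h := hCmax (insert t D) (by
      intro x hx
      rcases hx with rfl | hx
      · exact ht
      · exact (hDS hx).1) hins (by
      intro x hx
      by_cases hxt : x = t
      · exact hxt ▸ Set.mem_insert _ _
      · exact Set.mem_insert_of_mem _ (hsub ⟨hx, hxt⟩))
    have : D = insert t D \ {t} := by
      ext x
      simp only [Set.mem_diff, Set.mem_insert_iff, Set.mem_singleton_iff]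
      constructor
      · intro hx; exact ⟨Or.inr hx, fun he => htD (he ▸ hx)⟩
      · rintro ⟨h1 | h1, h2⟩
        · exact absurd h1 h2
        · exact h1
    rw [this, h]
  have key2 : ∀ C' ∈ MC (S \ {t}), insert t C' ∈ MC S := by
    intro C' hC'
    obtain ⟨hCS, hCch, hCmax⟩ := hC'
    have htC : t ∉ C' := fun h => (hCS h).2 rfl
    refine ⟨?_, hCch.insert (fun b hb _ => Or.inr (htop b (hCS hb).1)), ?_⟩
    · intro x hx
      rcases hx with rfl | hx
      · exact ht
      · exact (hCS hx).1
    · intro D hDS hDch hsub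
      have htD : t ∈ D := hsub (Set.mem_insert _ _)
      have h := hCmax (D \ {t}) (fun x hx => ⟨hDS hx.1, hx.2⟩)
        (hDch.mono Set.diff_subset) (by
          intro x hx
          exact ⟨hsub (Set.mem_insert_of_mem _ hx), fun he => htC (he ▸ hx)⟩)
      ext x
      simp only [Set.mem_insert_iff]
      constructor
      · intro hx
        by_cases hxt : x = t
        · exact Or.inl hxt
        · right; rw [← h]; exact ⟨hx, hxt⟩
      · rintro (rfl | hx)
        · exact htD
        · rw [← h] at hx; exact hx.1
  have himg : (fun C => C \ ({t} : Set (ℕ × ℕ))) '' MC S = MC (S \ {t}) := by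
    apply Set.Subset.antisymm
    · rintro _ ⟨C, hC, rfl⟩; exact key1 C hC
    · intro C' hC'
      have htC : t ∉ C' := fun h => (hC'.1 h).2 rfl
      refine ⟨insert t C', key2 C' hC', ?_⟩
      ext x
      simp only [Set.mem_diff, Set.mem_insert_iff, Set.mem_singleton_iff]
      constructor
      · rintro ⟨rfl | h1, h2⟩
        · exact absurd rfl h2
        · exact h1
      · intro hx; exact ⟨Or.inr hx, fun he => htC (he ▸ hx)⟩
  rw [← himg]
  rw [Set.ncard_image_of_injOn]
  intro C1 h1 C2 h2 heq
  have heq' : C1 \ {t} = C2 \ {t} := heq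
  have ht1 : t ∈ C1 := top_mem_MC ht htop h1
  have ht2 : t ∈ C2 := top_mem_MC ht htop h2
  ext x
  by_cases hxt : x = t
  · subst hxt; simp [ht1, ht2]
  · constructor
    · intro hx
      have : x ∈ C1 \ {t} := ⟨hx, hxt⟩
      rw [heq'] at this; exact this.1
    · intro hx
      have : x ∈ C2 \ {t} := ⟨hx, hxt⟩
      rw [← heq'] at this; exact this.1

/-- Maximal chains through a maximal element `t` of `S` are the maximal
chains of the down-set of `t`. -/
lemma MC_through_max {S : Set (ℕ × ℕ)} {t : ℕ × ℕ} (ht : t ∈ S)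
    (hmax : ∀ x ∈ S, t ≤ x → x = t) :
    MC S ∩ {C | t ∈ C} = MC {x ∈ S | x ≤ t} := by
  have hcomp : ∀ x ∈ S, (x ≤ t ∨ t ≤ x) → x ≤ t := by
    intro x hx h
    rcases h with h | h
    · exact h
    · exact (hmax x hx h).le
  apply Set.Subset.antisymm
  · rintro C ⟨⟨hCS, hCch, hCmax⟩, htC⟩
    refine ⟨?_, hCch, ?_⟩
    · intro x hx
      refine ⟨hCS hx, ?_⟩
      by_cases hxt : x = t
      · exact hxt.le
      · exact hcomp x (hCS hx) (hCch hx htC hxt)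
    · intro D hDS hDch hsub
      exact hCmax D (fun x hx => (hDS hx).1) hDch hsub
  · intro C hC
    obtain ⟨hCS, hCch, hCmax⟩ := hC
    have htT : t ∈ ({x ∈ S | x ≤ t} : Set (ℕ × ℕ)) := ⟨ht, le_refl t⟩
    have htC : t ∈ C := top_mem_MC htT (fun x hx => hx.2) ⟨hCS, hCch, hCmax⟩
    refine ⟨⟨fun x hx => (hCS hx).1, hCch, ?_⟩, htC⟩
    intro D hDS hDch hsub
    apply hCmax D _ hDch hsub
    intro x hx
    refine ⟨hDS hx, ?_⟩
    by_cases hxt : x = t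
    · exact hxt.le
    · exact hcomp x (hDS hx) (hDch hx (hsub htC) hxt)

/-- A maximal chain in a finite nonempty set contains a maximal element. -/
lemma MC_exists_max {S : Set (ℕ × ℕ)} (hfin : S.Finite) (hne : S.Nonempty)
    {C : Set (ℕ × ℕ)} (hC : C ∈ MC S) :
    ∃ x ∈ C, ∀ y ∈ S, x ≤ y → y = x := by
  obtain ⟨hCS, hCch, hCmax⟩ := hC
  have hCne : C.Nonempty := by
    by_contra h
    rw [Set.not_nonempty_iff_eq_empty] at h
    obtain ⟨s, hs⟩ := hne
    have := hCmax {s} (by simpa using hs) (Set.Subsingleton.isChain (by simp))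
      (h ▸ Set.empty_subset _)
    simp [h] at this
  obtain ⟨x, hxC, hx⟩ := Set.Finite.exists_maximalFor id C (hfin.subset hCS) hCne
  have hxtopC : ∀ z ∈ C, z ≤ x := by
    intro z hz
    by_cases hzx : z = x
    · exact hzx.le
    · rcases hCch hz hxC hzx with h | h
      · exact h
      · exact hx hz h
  refine ⟨x, hxC, ?_⟩
  intro y hy hxy
  by_contra hne'
  have hyC : y ∉ C := fun h => hne' (le_antisymm (hxtopC y h) hxy)
  have hins : IsChain (· ≤ ·) (insert y C) :=
    hCch.insert (fun b hb _ => Or.inr ((hxtopC b hb).trans hxy))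
  have h := hCmax (insert y C) (by
    intro z hz
    rcases hz with rfl | hz
    · exact hy
    · exact hCS hz) hins (Set.subset_insert _ _)
  exact hyC (h ▸ Set.mem_insert _ _)

/-- The maximal elements of `P_{k+1,n}` minus its top are `(k,n)` and `(k+1,n-1)`. -/
lemma max_of_Q {k n : ℕ} (hkn : k + 1 < n) {x : ℕ × ℕ}
    (hx : x ∈ Pset (k + 1) n \ {((k + 1 : ℕ), n)})
    (hmax : ∀ y ∈ Pset (k + 1) n \ {((k + 1 : ℕ), n)}, x ≤ y → y = x) :
    x = ((k : ℕ), n) ∨ x = ((k + 1 : ℕ), n - 1) := by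
  obtain ⟨a, b⟩ := x
  obtain ⟨⟨ha, hb, hab⟩, hne⟩ := hx
  simp only [Set.mem_singleton_iff, Prod.mk.injEq, not_and] at hne
  simp only [Prod.mk.injEq]
  by_contra hcon
  push_neg at hcon
  obtain ⟨h1, h2⟩ := hcon
  rcases Nat.lt_or_ge b n with hbn | hbn
  · -- can go up in second coordinate, unless x = (k+1, n-1)
    have hy : ((a : ℕ), b + 1) ∈ Pset (k + 1) n \ {((k + 1 : ℕ), n)} := by
      constructor
      · exact ⟨ha, by omega, by omega⟩
      · simp only [Set.mem_singleton_iff, Prod.mk.injEq, not_and]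
        intro h; subst h
        intro h'
        exact absurd (h2 rfl) (by omega)
    have := hmax _ hy (by simp)
    simp only [Prod.mk.injEq] at this
    omega
  · have hbn' : b = n := by omega
    have hak : a < k + 1 := by
      rcases Nat.lt_or_ge a (k + 1) with h | h
      · exact h
      · exact absurd hbn' (hne (by omega))
    have hak' : a ≠ k := by
      intro h
      exact absurd hbn' (h1 h)
    have hy : ((a + 1 : ℕ), n) ∈ Pset (k + 1) n \ {((k + 1 : ℕ), n)} := by
      constructor
      · exact ⟨by omega, le_refl n, by omega⟩
      · simp only [Set.mem_singleton_iff, Prod.mk.injEq, not_and]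
        intro h; omega
    have := hmax _ hy (Prod.mk_le_mk.mpr ⟨by omega, by omega⟩)
    simp only [Prod.mk.injEq] at this
    omega

/-- `P_{0,n}` has exactly one maximal chain. -/
lemma MC_base (n : ℕ) (hn : 1 ≤ n) : MC (Pset 0 n) = {Pset 0 n} := by
  have hch : IsChain (· ≤ ·) (Pset 0 n) := by
    rintro ⟨a, b⟩ ⟨ha, hb, hab⟩ ⟨c, d⟩ ⟨hc, hd, hcd⟩ hne
    simp only [Prod.mk_le_mk]
    omega
  apply Set.Subset.antisymm
  · intro C hC
    obtain ⟨hCS, hCch, hCmax⟩ := hC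
    exact (hCmax (Pset 0 n) (le_refl _) hch hCS).symm ▸ rfl
  · rintro C rfl
    refine ⟨le_refl _, hch, fun D hDS _ hsub => Set.Subset.antisymm hDS hsub⟩

/-- Main counting lemma, shifted form, by strong induction:
`#MC(P_{k+1,n}) + C(n+k, k) = C(n+k, k+1)` for `k + 1 < n`. -/
lemma MC_count : ∀ N k n : ℕ, k + n ≤ N → k + 1 < n →
    (MC (Pset (k + 1) n)).ncard + (n + k).choose k = (n + k).choose (k + 1) := by
  intro N
  induction N with
  | zero => intro k n hN hkn; omega
  | succ N ih =>
    intro k n hN hkn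
    -- remove the top (k+1, n)
    have ht : ((k + 1 : ℕ), n) ∈ Pset (k + 1) n := ⟨le_refl _, le_refl _, hkn⟩
    have htop : ∀ x ∈ Pset (k + 1) n, x ≤ ((k + 1 : ℕ), n) := by
      rintro ⟨a, b⟩ ⟨ha, hb, hab⟩
      exact Prod.mk_le_mk.mpr ⟨ha, hb⟩
    set Q := Pset (k + 1) n \ {((k + 1 : ℕ), n)} with hQ
    have h1 : (MC (Pset (k + 1) n)).ncard = (MC Q).ncard :=
      ncard_MC_remove_top ht htop
    have hQfin : Q.Finite := (Pset_finite _ _).subset Set.diff_subset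
    have hQne : Q.Nonempty := by
      refine ⟨((0 : ℕ), 1), ⟨by omega, by omega, by omega⟩, ?_⟩
      simp only [Set.mem_singleton_iff, Prod.mk.injEq]
      omega
    have htA : ((k : ℕ), n) ∈ Q := by
      refine ⟨⟨by omega, le_refl _, by omega⟩, ?_⟩
      simp only [Set.mem_singleton_iff, Prod.mk.injEq]; omega
    have hmaxA : ∀ x ∈ Q, ((k : ℕ), n) ≤ x → x = ((k : ℕ), n) := by
      rintro ⟨a, b⟩ ⟨⟨ha, hb, hab⟩, hne⟩ hle
      simp only [Set.mem_singleton_iff, Prod.mk.injEq, not_and] at hne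
      rw [Prod.mk_le_mk] at hle
      simp only [Prod.mk.injEq]
      omega
    have hsetA : {x ∈ Q | x ≤ ((k : ℕ), n)} = Pset k n := by
      ext ⟨a, b⟩
      simp only [hQ, Pset, Set.mem_setOf_eq, Set.mem_diff, Set.mem_singleton_iff,
        Prod.mk.injEq, Prod.mk_le_mk, not_and]
      omega
    have hA : MC Q ∩ {C | ((k : ℕ), n) ∈ C} = MC (Pset k n) := by
      rw [MC_through_max htA hmaxA, hsetA]
    have hcover : MC Q =
        (MC Q ∩ {C | ((k : ℕ), n) ∈ C}) ∪ (MC Q ∩ {C | ((k + 1 : ℕ), n - 1) ∈ C}) := by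
      apply Set.Subset.antisymm
      · intro C hC
        obtain ⟨x, hxC, hxmax⟩ := MC_exists_max hQfin hQne hC
        rcases max_of_Q hkn (hC.1 hxC) hxmax with rfl | rfl
        · exact Or.inl ⟨hC, hxC⟩
        · exact Or.inr ⟨hC, hxC⟩
      · rintro C (hC | hC) <;> exact hC.1
    have hdisj : Disjoint (MC Q ∩ {C | ((k : ℕ), n) ∈ C})
        (MC Q ∩ {C | ((k + 1 : ℕ), n - 1) ∈ C}) := by
      rw [Set.disjoint_left]
      rintro C ⟨hC, h1'⟩ ⟨_, h2'⟩
      have hne : ((k : ℕ), n) ≠ ((k + 1 : ℕ), n - 1) := by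
        simp only [ne_eq, Prod.mk.injEq]; omega
      rcases hC.2.1 h1' h2' hne with h | h <;>
        · rw [Prod.mk_le_mk] at h; omega
    have hfin1 : (MC Q ∩ {C | ((k : ℕ), n) ∈ C}).Finite :=
      (MC_finite hQfin).subset Set.inter_subset_left
    have hfin2 : (MC Q ∩ {C | ((k + 1 : ℕ), n - 1) ∈ C}).Finite :=
      (MC_finite hQfin).subset Set.inter_subset_left
    have h2 : (MC Q).ncard = (MC Q ∩ {C | ((k : ℕ), n) ∈ C}).ncard
        + (MC Q ∩ {C | ((k + 1 : ℕ), n - 1) ∈ C}).ncard := by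
      nth_rewrite 1 [hcover]
      exact Set.ncard_union_eq hdisj hfin1 hfin2
    rcases Nat.lt_or_ge (k + 2) n with hn2 | hn2
    · -- case k + 2 < n : second part is MC (Pset (k+1) (n-1))
      have htB : ((k + 1 : ℕ), n - 1) ∈ Q := by
        refine ⟨⟨le_refl _, by omega, by omega⟩, ?_⟩
        simp only [Set.mem_singleton_iff, Prod.mk.injEq]; omega
      have hmaxB : ∀ x ∈ Q, ((k + 1 : ℕ), n - 1) ≤ x → x = ((k + 1 : ℕ), n - 1) := by
        rintro ⟨a, b⟩ ⟨⟨ha, hb, hab⟩, hne⟩ hle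
        simp only [Set.mem_singleton_iff, Prod.mk.injEq, not_and] at hne
        rw [Prod.mk_le_mk] at hle
        simp only [Prod.mk.injEq]
        omega
      have hsetB : {x ∈ Q | x ≤ ((k + 1 : ℕ), n - 1)} = Pset (k + 1) (n - 1) := by
        ext ⟨a, b⟩
        simp only [hQ, Pset, Set.mem_setOf_eq, Set.mem_diff, Set.mem_singleton_iff,
          Prod.mk.injEq, Prod.mk_le_mk, not_and]
        omega
      have hB : MC Q ∩ {C | ((k + 1 : ℕ), n - 1) ∈ C} = MC (Pset (k + 1) (n - 1)) := by
        rw [MC_through_max htB hmaxB, hsetB]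
      have ihB := ih k (n - 1) (by omega) (by omega)
      rw [h1, h2, hA, hB]
      match k, ihB with
      | 0, ihB =>
        have hbase : (MC (Pset 0 n)).ncard = 1 := by
          rw [MC_base n (by omega)]
          exact Set.ncard_singleton _
        rw [hbase]
        have q1 : (n + 0).choose (0 + 1) = n := by simp
        have q2 : (n - 1 + 0).choose (0 + 1) = n - 1 := by simp
        have q3 : (n + 0).choose 0 = 1 := Nat.choose_zero_right _
        have q4 : (n - 1 + 0).choose 0 = 1 := Nat.choose_zero_right _
        omega
      | j + 1, ihB =>
        have ihA := ih j n (by omega) (by omega)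
        have e1 : n - 1 + (j + 1) = n + j := by omega
        rw [e1] at ihB
        have p1 : (n + (j + 1)).choose (j + 1)
            = (n + j).choose j + (n + j).choose (j + 1) :=
          Nat.choose_succ_succ (n + j) j
        have p2 : (n + (j + 1)).choose (j + 1 + 1)
            = (n + j).choose (j + 1) + (n + j).choose (j + 1 + 1) :=
          Nat.choose_succ_succ (n + j) (j + 1)
        omega
    · -- case n = k + 2 : second part is empty
      have hn2' : n = k + 2 := by omega
      subst hn2'
      have hB : MC Q ∩ {C | ((k + 1 : ℕ), k + 2 - 1) ∈ C} = ∅ := by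
        rw [Set.eq_empty_iff_forall_notMem]
        rintro C ⟨hC, hmem⟩
        have := hC.1 hmem
        rw [hQ] at this
        obtain ⟨⟨-, -, h'⟩, -⟩ := this
        omega
      rw [h1, h2, hA, hB, Set.ncard_empty, Nat.add_zero]
      match k with
      | 0 =>
        have hbase : (MC (Pset 0 (0 + 2))).ncard = 1 := by
          rw [MC_base (0 + 2) (by omega)]
          exact Set.ncard_singleton _
        rw [hbase]
        decide
      | j + 1 =>
        have ihA := ih j (j + 1 + 2) (by omega) (by omega)
        have p1 : (j + 1 + 2 + (j + 1)).choose (j + 1)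
            = (j + 1 + 2 + j).choose j + (j + 1 + 2 + j).choose (j + 1) :=
          Nat.choose_succ_succ (j + 1 + 2 + j) j
        have p2 : (j + 1 + 2 + (j + 1)).choose (j + 1 + 1)
            = (j + 1 + 2 + j).choose (j + 1) + (j + 1 + 2 + j).choose (j + 1 + 1) :=
          Nat.choose_succ_succ (j + 1 + 2 + j) (j + 1)
        have hsymm : (j + 1 + 2 + j).choose (j + 1 + 1) = (j + 1 + 2 + j).choose (j + 1) := by
          have h := Nat.choose_symm (n := j + 1 + 2 + j) (k := j + 1) (by omega)
          have e : j + 1 + 2 + j - (j + 1) = j + 1 + 1 := by omega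
          rw [e] at h
          exact h
        omega

/-- Bridge: maximal chains in the subtype match maximal chains as subsets. -/
lemma MC_bridge (k n : ℕ) :
    {C : Set {p : ℕ × ℕ // p.1 ≤ k ∧ p.2 ≤ n ∧ p.1 < p.2} |
      IsMaxChain (· ≤ ·) C}.ncard = (MC (Pset k n)).ncard := by
  set P := {p : ℕ × ℕ // p.1 ≤ k ∧ p.2 ≤ n ∧ p.1 < p.2} with hP
  have hrange : Set.range (Subtype.val : P → ℕ × ℕ) = Pset k n := by
    rw [Subtype.range_val_subtype]; rfl
  have himg : (fun C : Set P => Subtype.val '' C) ''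
      {C : Set P | IsMaxChain (· ≤ ·) C} = MC (Pset k n) := by
    apply Set.Subset.antisymm
    · rintro _ ⟨C, hC, rfl⟩
      obtain ⟨hCch, hCmax⟩ := hC
      refine ⟨?_, ?_, ?_⟩
      · rw [← hrange]; exact Set.image_subset_range _ _
      · rintro _ ⟨x, hx, rfl⟩ _ ⟨y, hy, rfl⟩ hne
        have hxy : x ≠ y := fun h => hne (h ▸ rfl)
        rcases hCch hx hy hxy with h | h
        · exact Or.inl h
        · exact Or.inr h
      · intro D hDS hDch hsub
        have hDrange : D ⊆ Set.range (Subtype.val : P → ℕ × ℕ) := by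
          rw [hrange]; exact hDS
        have hD'ch : IsChain (· ≤ ·) (Subtype.val ⁻¹' D : Set P) := by
          intro x hx y hy hne
          have hxy : (x : ℕ × ℕ) ≠ (y : ℕ × ℕ) :=
            fun h => hne (Subtype.val_injective h)
          rcases hDch hx hy hxy with h | h
          · exact Or.inl h
          · exact Or.inr h
        have hCD' : C ⊆ Subtype.val ⁻¹' D := fun c hc => hsub ⟨c, hc, rfl⟩
        have heq : C = Subtype.val ⁻¹' D := hCmax hD'ch hCD'
        calc D = Subtype.val '' (Subtype.val ⁻¹' D) :=
              (Set.image_preimage_eq_of_subset hDrange).symm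
          _ = Subtype.val '' C := by rw [← heq]
    · intro C hC
      obtain ⟨hCS, hCch, hCmax⟩ := hC
      have hCrange : C ⊆ Set.range (Subtype.val : P → ℕ × ℕ) := by
        rw [hrange]; exact hCS
      refine ⟨Subtype.val ⁻¹' C, ⟨?_, ?_⟩, Set.image_preimage_eq_of_subset hCrange⟩
      · intro x hx y hy hne
        have hxy : (x : ℕ × ℕ) ≠ (y : ℕ × ℕ) :=
          fun h => hne (Subtype.val_injective h)
        rcases hCch hx hy hxy with h | h
        · exact Or.inl h
        · exact Or.inr h
      · intro D hDch hsub
        have hDS : Subtype.val '' D ⊆ Pset k n := by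
          rw [← hrange]; exact Set.image_subset_range _ _
        have hDch' : IsChain (· ≤ ·) (Subtype.val '' D) := by
          rintro _ ⟨x, hx, rfl⟩ _ ⟨y, hy, rfl⟩ hne
          have hxy : x ≠ y := fun h => hne (h ▸ rfl)
          rcases hDch hx hy hxy with h | h
          · exact Or.inl h
          · exact Or.inr h
        have hsub' : C ⊆ Subtype.val '' D := by
          intro c hc
          obtain ⟨c', hc'⟩ := hCrange hc
          refine ⟨c', hsub ?_, hc'⟩
          show (c' : ℕ × ℕ) ∈ C
          rw [hc']; exact hc
        have heq : Subtype.val '' D = C := hCmax _ hDS hDch' hsub'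
        calc Subtype.val ⁻¹' C = Subtype.val ⁻¹' (Subtype.val '' D) := by rw [heq]
          _ = D := Set.preimage_image_eq D Subtype.val_injective
  rw [← himg, Set.ncard_image_of_injOn
    (Set.injOn_of_injective (Set.image_injective.mpr Subtype.val_injective))]

/-- Observation 2 (ballot-number form): for `k < n`, `n ≥ 1`, the number
`d(k,n)` of maximal chains of the poset `P_{k,n}` satisfies
`n · d(k,n) = (n - k) · C(n + k - 1, k)`. -/
theorem card_maxChains_Pkn (k n : ℕ) (hk : k < n) (hn : 1 ≤ n) :
    n * {C : Set {p : ℕ × ℕ // p.1 ≤ k ∧ p.2 ≤ n ∧ p.1 < p.2} |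
          IsMaxChain (· ≤ ·) C}.ncard
      = (n - k) * Nat.choose (n + k - 1) k := by
  rw [MC_bridge k n]
  match k, hk with
  | 0, hk =>
    have hbase : (MC (Pset 0 n)).ncard = 1 := by
      rw [MC_base n hn]
      exact Set.ncard_singleton _
    rw [hbase]
    simp
  | j + 1, hk =>
    have hcount := MC_count (j + n) j n (le_refl _) hk
    have e1 : n + (j + 1) - 1 = n + j := by omega
    rw [e1]
    -- key identity : n * C(n+j, j) = (j+1) * C(n+j, j+1)
    have hid : (n + j).choose (j + 1) * (j + 1) = (n + j).choose j * n := by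
      have h := Nat.choose_succ_right_eq (n + j) j
      have e2 : n + j - j = n := by omega
      rw [e2] at h
      exact h
    set a := (MC (Pset (j + 1) n)).ncard with ha
    set c1 := (n + j).choose j with hc1
    set c2 := (n + j).choose (j + 1) with hc2
    have h1 : n * a + n * c1 = n * c2 := by
      rw [← Nat.mul_add, hcount]
    have h2 : n * c1 = (j + 1) * c2 := by
      rw [Nat.mul_comm n c1, Nat.mul_comm (j + 1) c2]
      exact hid.symm
    have h3 : (n - (j + 1)) * c2 + (j + 1) * c2 = n * c2 := by
      rw [← Nat.add_mul, Nat.sub_add_cancel hk.le]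
    omega
end
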